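/- Let X(u) be a cumulative Lie group B-spline with velocity ω^{(k)} and acceleration ω̇^{(k)} defined by the recursions ω^{(1)} = ω̇^{(1)} = ω̈^{(1)} = 0, ω^{(j)} = Ad_{A_{j-1}^{-1}} ω^{(j-1)} + λ̇_{j-1} d_{j-1}, ω̇^{(j)} = λ̇_{j-1}[ω^{(j)}_∧, D_{j-1}]_∨ + Ad_{A_{j-1}^{-1}} ω̇^{(j-1)} + λ̈_{j-1} d_{j-1}, and ω̈^{(j)} = Ad_{A_{j-1}^{-1}} ω̈^{(j-1)} + λ⃛_{j-1} d_{j-1} + [λ̈_{j-1} ω^{(j)}_∧ + 2λ̇_{j-1} ω̇^{(j)}_∧ − λ̇²_{j-1}[ω^{(j)}_∧, D_{j-1}], D_{j-1}]_∨. Then the third derivative satisfies X⃛(u) = X(u)((ω^{(k)}_∧)³ + 2ω^{(k)}_∧ ω̇^{(k)}_∧ + ω̇^{(k)}_∧ ω^{(k)}_∧ + ω̈^{(k)}_∧). -/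

import Mathlib

open NormedSpace

attribute [local instance] Matrix.linftyOpNormedRing Matrix.linftyOpNormedAlgebra

lemma cs3_alg1 {R M : Type*} [CommRing R] [Ring M] [Algebra R M] (a b : R) (D E Ei W Wd : M)
    (hc : Ei * D = D * Ei) :
    ((-a) • (Ei * D) * W + Ei * Wd) * E + (Ei * W) * (a • (E * D)) + b • D
      = a • ((Ei * W * E + a • D) * D - D * (Ei * W * E + a • D)) + Ei * Wd * E + b • D := by
  have h2 : ∀ x : M, D * (Ei * x) = Ei * (D * x) := fun x => by
    rw [← mul_assoc, ← hc, mul_assoc]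
  simp only [mul_assoc, smul_mul_assoc, mul_smul_comm, neg_mul, mul_sub, sub_mul, smul_sub,
    smul_add, mul_add, add_mul, neg_smul, smul_smul, h2]
  module

lemma cs3_alg2 {R M : Type*} [CommRing R] [Ring M] [Algebra R M] (a b c : R)
    (D E Ei Wp Wd Wdp Wdd : M) (hc : Ei * D = D * Ei)
    (hrel : Wdp = a • (Wp * D - D * Wp) + Ei * Wd * E + b • D) :
    (a • (Wdp * D - D * Wdp) + b • (Wp * D - D * Wp))
        + ((((-a) • (Ei * D)) * Wd + Ei * Wdd) * E + (Ei * Wd) * (a • (E * D))) + c • D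
      = Ei * Wdd * E + c • D
        + ((b • Wp + (2 * a) • Wdp - (a ^ 2) • (Wp * D - D * Wp)) * D
          - D * (b • Wp + (2 * a) • Wdp - (a ^ 2) • (Wp * D - D * Wp))) := by
  have h2 : ∀ x : M, D * (Ei * x) = Ei * (D * x) := fun x => by
    rw [← mul_assoc, ← hc, mul_assoc]
  subst hrel
  simp only [mul_assoc, smul_mul_assoc, mul_smul_comm, neg_mul, mul_sub, sub_mul, smul_sub,
    smul_add, mul_add, add_mul, neg_smul, smul_smul, h2]
  module

lemma cs3_alg3 {R M : Type*} [CommRing R] [Ring M] [Algebra R M] (a : R) (D E Ei P W : M)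
    (hu : E * Ei = 1) :
    (P * W) * E + P * (a • (E * D)) = (P * E) * (Ei * W * E + a • D) := by
  have h2 : ∀ x : M, E * (Ei * x) = x := fun x => by rw [← mul_assoc, hu, one_mul]
  simp only [mul_assoc, smul_mul_assoc, mul_smul_comm, mul_add, h2]

lemma cs3_contDiff3_derivs {f : ℝ → ℝ} (hf : ContDiff ℝ 3 f) :
    Differentiable ℝ f ∧ Differentiable ℝ (deriv f) ∧ Differentiable ℝ (deriv (deriv f)) := by
  have h1 : ContDiff ℝ ((2 : WithTop ℕ∞) + 1) f := by exact_mod_cast hf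
  rw [contDiff_succ_iff_deriv] at h1
  obtain ⟨hd, -, h2⟩ := h1
  have h2' : ContDiff ℝ ((1 : WithTop ℕ∞) + 1) (deriv f) := by exact_mod_cast h2
  rw [contDiff_succ_iff_deriv] at h2'
  obtain ⟨hd2, -, h3⟩ := h2'
  exact ⟨hd, hd2, h3.differentiable one_ne_zero⟩

/-- For the cumulative Lie group B-spline
`X(u) = X_i Π_{j=1}^{k-1} Exp(λ_j(u) d_j)` with velocity `ω^{(k)}`, acceleration `ω̇^{(k)}`
and jerk `ω̈^{(k)}` defined by the recursions (expressed through the hat map, with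
`⟦P,Q⟧ = PQ − QP` the matrix commutator):
`ω^{(1)} = ω̇^{(1)} = ω̈^{(1)} = 0`,
`ω^{(j)} = Ad_{A_{j-1}⁻¹} ω^{(j-1)} + λ̇_{j-1} d_{j-1}`,
`ω̇^{(j)} = λ̇_{j-1}⟦ω^{(j)}_∧, D_{j-1}⟧_∨ + Ad_{A_{j-1}⁻¹} ω̇^{(j-1)} + λ̈_{j-1} d_{j-1}`,
`ω̈^{(j)} = Ad_{A_{j-1}⁻¹} ω̈^{(j-1)} + λ⃛_{j-1} d_{j-1}
  + ⟦λ̈_{j-1} ω^{(j)}_∧ + 2λ̇_{j-1} ω̇^{(j)}_∧ − λ̇²_{j-1}⟦ω^{(j)}_∧, D_{j-1}⟧, D_{j-1}⟧_∨`,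
the third derivative satisfies
`X⃛(u) = X(u)((ω^{(k)}_∧)³ + 2ω^{(k)}_∧ ω̇^{(k)}_∧ + ω̇^{(k)}_∧ ω^{(k)}_∧ + ω̈^{(k)}_∧)`. -/
theorem cumulative_spline_third_deriv {n p : ℕ} (k : ℕ) (hk : 1 ≤ k)
    (hat : (Fin p → ℝ) →ₗ[ℝ] Matrix (Fin n) (Fin n) ℝ)
    (Xi : Matrix (Fin n) (Fin n) ℝ)
    (lam : ℕ → ℝ → ℝ) (d : ℕ → Fin p → ℝ)
    (hlam : ∀ j, ContDiff ℝ 3 (lam j))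
    (A : ℕ → ℝ → Matrix (Fin n) (Fin n) ℝ)
    (hA : ∀ j u, A j u = exp (lam j u • hat (d j)))
    (X : ℝ → Matrix (Fin n) (Fin n) ℝ)
    (hX : ∀ u, X u = Xi * ((List.range (k - 1)).map (fun j => A (j + 1) u)).prod)
    (ω ωd ωdd : ℕ → ℝ → Fin p → ℝ)
    (hω1 : ∀ u, ω 1 u = 0) (hωd1 : ∀ u, ωd 1 u = 0) (hωdd1 : ∀ u, ωdd 1 u = 0)
    (hωrec : ∀ j u, 2 ≤ j → j ≤ k →
      hat (ω j u) = (A (j - 1) u)⁻¹ * hat (ω (j - 1) u) * A (j - 1) u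
        + deriv (lam (j - 1)) u • hat (d (j - 1)))
    (hωdrec : ∀ j u, 2 ≤ j → j ≤ k →
      hat (ωd j u)
        = deriv (lam (j - 1)) u •
            (hat (ω j u) * hat (d (j - 1)) - hat (d (j - 1)) * hat (ω j u))
          + (A (j - 1) u)⁻¹ * hat (ωd (j - 1) u) * A (j - 1) u
          + deriv (deriv (lam (j - 1))) u • hat (d (j - 1)))
    (hωddrec : ∀ j u, 2 ≤ j → j ≤ k →
      hat (ωdd j u)
        = (A (j - 1) u)⁻¹ * hat (ωdd (j - 1) u) * A (j - 1) u
          + deriv (deriv (deriv (lam (j - 1)))) u • hat (d (j - 1))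
          + ((deriv (deriv (lam (j - 1))) u • hat (ω j u)
              + (2 * deriv (lam (j - 1)) u) • hat (ωd j u)
              - (deriv (lam (j - 1)) u ^ 2) •
                  (hat (ω j u) * hat (d (j - 1)) - hat (d (j - 1)) * hat (ω j u)))
                * hat (d (j - 1))
            - hat (d (j - 1)) *
                (deriv (deriv (lam (j - 1))) u • hat (ω j u)
                  + (2 * deriv (lam (j - 1)) u) • hat (ωd j u)
                  - (deriv (lam (j - 1)) u ^ 2) •
                      (hat (ω j u) * hat (d (j - 1)) - hat (d (j - 1)) * hat (ω j u)))))
    (u : ℝ) :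
    HasDerivAt (deriv (deriv X))
      (X u * (hat (ω k u) ^ 3 + 2 • (hat (ω k u) * hat (ωd k u))
        + hat (ωd k u) * hat (ω k u) + hat (ωdd k u))) u := by
  -- differentiability of the λ's and their derivatives
  have hld : ∀ j, Differentiable ℝ (lam j) := fun j => (cs3_contDiff3_derivs (hlam j)).1
  have hld2 : ∀ j, Differentiable ℝ (deriv (lam j)) :=
    fun j => (cs3_contDiff3_derivs (hlam j)).2.1
  have hld3 : ∀ j, Differentiable ℝ (deriv (deriv (lam j))) :=
    fun j => (cs3_contDiff3_derivs (hlam j)).2.2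
  -- basic facts about the exponentials A j
  have hAd : ∀ jj v, HasDerivAt (A jj) (deriv (lam jj) v • (A jj v * hat (d jj))) v := by
    intro jj v
    have h := (hasDerivAt_exp_smul_const (𝕂 := ℝ) (hat (d jj)) (lam jj v)).scomp v
      ((hld jj v).hasDerivAt)
    simp only [Function.comp_def, ← hA jj] at h
    rw [show A jj = _ from funext (hA jj)]
    exact h
  have hAinv : ∀ jj v, (A jj v)⁻¹ = exp ((-lam jj v) • hat (d jj)) := by
    intro jj v; rw [hA, neg_smul, Matrix.exp_neg]
  have hAinvd : ∀ jj v, HasDerivAt (fun w => (A jj w)⁻¹)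
      ((-deriv (lam jj) v) • ((A jj v)⁻¹ * hat (d jj))) v := by
    intro jj v
    have h := (hasDerivAt_exp_smul_const (𝕂 := ℝ) (hat (d jj)) (-lam jj v)).scomp v
      ((hld jj v).hasDerivAt.neg)
    simp only [Function.comp_def, ← hAinv jj] at h
    rw [show (fun w => (A jj w)⁻¹) = _ from funext (hAinv jj), hAinv]
    exact h
  have hcommi : ∀ jj v, (A jj v)⁻¹ * hat (d jj) = hat (d jj) * (A jj v)⁻¹ := by
    intro jj v; rw [hAinv]
    exact (((Commute.refl (hat (d jj))).smul_left (-lam jj v)).exp_left).eq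
  have hunit : ∀ jj v, A jj v * (A jj v)⁻¹ = 1 := by
    intro jj v
    rw [hAinv, hA, ← Matrix.exp_add_of_commute _ _
      (((Commute.refl (hat (d jj))).smul_left (lam jj v)).smul_right (-lam jj v)), ← add_smul]
    simp
  -- the main induction
  have key : ∀ m : ℕ, m + 1 ≤ k →
      (∀ v, HasDerivAt (fun w => hat (ω (m + 1) w)) (hat (ωd (m + 1) v)) v) ∧
      (∀ v, HasDerivAt (fun w => hat (ωd (m + 1) w)) (hat (ωdd (m + 1) v)) v) ∧
      (∀ v, HasDerivAt (fun w => Xi * ((List.range m).map (fun j => A (j + 1) w)).prod)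
        ((Xi * ((List.range m).map (fun j => A (j + 1) v)).prod) * hat (ω (m + 1) v)) v) := by
    intro m
    induction m with
    | zero =>
      intro _
      refine ⟨?_, ?_, ?_⟩ <;> intro v <;>
        simp only [hω1, hωd1, hωdd1, map_zero, List.range_zero, List.map_nil, List.prod_nil,
          mul_one, mul_zero] <;> exact hasDerivAt_const v _
    | succ m ih =>
      intro hk2
      obtain ⟨ihW, ihWd, ihP⟩ := ih (by omega)
      have e : m + 2 - 1 = m + 1 := rfl
      -- C1
      have hC1 : ∀ v, HasDerivAt (fun w => hat (ω (m + 2) w)) (hat (ωd (m + 2) v)) v := by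
        intro v
        have hfun : (fun w => hat (ω (m + 2) w))
            = fun w => (A (m + 1) w)⁻¹ * hat (ω (m + 1) w) * A (m + 1) w
                + deriv (lam (m + 1)) w • hat (d (m + 1)) := by
          funext w
          have h := hωrec (m + 2) w (by omega) hk2
          rw [e] at h
          exact h
        rw [hfun]
        have t := (((hAinvd (m + 1) v).mul (ihW v)).mul (hAd (m + 1) v)).add
          (((hld2 (m + 1) v).hasDerivAt).smul_const (hat (d (m + 1))))
        have hval : hat (ωd (m + 2) v)
            = ((-deriv (lam (m + 1)) v) • ((A (m + 1) v)⁻¹ * hat (d (m + 1)))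
                  * hat (ω (m + 1) v) + (A (m + 1) v)⁻¹ * hat (ωd (m + 1) v)) * A (m + 1) v
              + ((A (m + 1) v)⁻¹ * hat (ω (m + 1) v))
                  * (deriv (lam (m + 1)) v • (A (m + 1) v * hat (d (m + 1))))
              + deriv (deriv (lam (m + 1))) v • hat (d (m + 1)) := by
          have h1 := hωdrec (m + 2) v (by omega) hk2
          have h2 := hωrec (m + 2) v (by omega) hk2
          rw [e] at h1 h2
          rw [h1, h2]
          exact (cs3_alg1 (deriv (lam (m + 1)) v) (deriv (deriv (lam (m + 1))) v)
            (hat (d (m + 1))) (A (m + 1) v) ((A (m + 1) v)⁻¹) (hat (ω (m + 1) v))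
            (hat (ωd (m + 1) v)) (hcommi (m + 1) v)).symm
        rw [hval]
        exact t
      -- C2
      have hC2 : ∀ v, HasDerivAt (fun w => hat (ωd (m + 2) w)) (hat (ωdd (m + 2) v)) v := by
        intro v
        have hfun : (fun w => hat (ωd (m + 2) w))
            = fun w => deriv (lam (m + 1)) w •
                  (hat (ω (m + 2) w) * hat (d (m + 1)) - hat (d (m + 1)) * hat (ω (m + 2) w))
                + (A (m + 1) w)⁻¹ * hat (ωd (m + 1) w) * A (m + 1) w
                + deriv (deriv (lam (m + 1))) w • hat (d (m + 1)) := by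
          funext w
          have h := hωdrec (m + 2) w (by omega) hk2
          rw [e] at h
          exact h
        rw [hfun]
        have t := ((((hld2 (m + 1) v).hasDerivAt).smul
            (((hC1 v).mul_const (hat (d (m + 1)))).sub
              (HasDerivAt.const_mul (hat (d (m + 1))) (hC1 v)))).add
          (((hAinvd (m + 1) v).mul (ihWd v)).mul (hAd (m + 1) v))).add
          (((hld3 (m + 1) v).hasDerivAt).smul_const (hat (d (m + 1))))
        have hval : hat (ωdd (m + 2) v)
            = (deriv (lam (m + 1)) v •
                  (hat (ωd (m + 2) v) * hat (d (m + 1)) - hat (d (m + 1)) * hat (ωd (m + 2) v))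
                + deriv (deriv (lam (m + 1))) v •
                  (hat (ω (m + 2) v) * hat (d (m + 1)) - hat (d (m + 1)) * hat (ω (m + 2) v)))
              + (((-deriv (lam (m + 1)) v) • ((A (m + 1) v)⁻¹ * hat (d (m + 1)))
                    * hat (ωd (m + 1) v) + (A (m + 1) v)⁻¹ * hat (ωdd (m + 1) v)) * A (m + 1) v
                + ((A (m + 1) v)⁻¹ * hat (ωd (m + 1) v))
                    * (deriv (lam (m + 1)) v • (A (m + 1) v * hat (d (m + 1)))))
              + deriv (deriv (deriv (lam (m + 1)))) v • hat (d (m + 1)) := by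
          have h1 := hωddrec (m + 2) v (by omega) hk2
          have h2 := hωdrec (m + 2) v (by omega) hk2
          rw [e] at h1 h2
          rw [h1]
          exact (cs3_alg2 (deriv (lam (m + 1)) v) (deriv (deriv (lam (m + 1))) v)
            (deriv (deriv (deriv (lam (m + 1)))) v) (hat (d (m + 1))) (A (m + 1) v)
            ((A (m + 1) v)⁻¹) (hat (ω (m + 2) v)) (hat (ωd (m + 1) v)) (hat (ωd (m + 2) v))
            (hat (ωdd (m + 1) v)) (hcommi (m + 1) v) h2).symm
        rw [hval]
        exact t
      -- C3
      have hC3 : ∀ v, HasDerivAt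
          (fun w => Xi * ((List.range (m + 1)).map (fun j => A (j + 1) w)).prod)
          ((Xi * ((List.range (m + 1)).map (fun j => A (j + 1) v)).prod) * hat (ω (m + 2) v))
          v := by
        intro v
        have hsplit : ∀ w, Xi * ((List.range (m + 1)).map (fun j => A (j + 1) w)).prod
            = (Xi * ((List.range m).map (fun j => A (j + 1) w)).prod) * A (m + 1) w := by
          intro w
          rw [List.range_succ]
          simp [mul_assoc]
        have hfun : (fun w => Xi * ((List.range (m + 1)).map (fun j => A (j + 1) w)).prod)
            = fun w => (Xi * ((List.range m).map (fun j => A (j + 1) w)).prod) * A (m + 1) w :=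
          funext hsplit
        rw [hfun]
        have t := (ihP v).mul (hAd (m + 1) v)
        have hval : (Xi * ((List.range (m + 1)).map (fun j => A (j + 1) v)).prod)
              * hat (ω (m + 2) v)
            = ((Xi * ((List.range m).map (fun j => A (j + 1) v)).prod) * hat (ω (m + 1) v))
                * A (m + 1) v
              + (Xi * ((List.range m).map (fun j => A (j + 1) v)).prod)
                  * (deriv (lam (m + 1)) v • (A (m + 1) v * hat (d (m + 1)))) := by
          have h2 := hωrec (m + 2) v (by omega) hk2
          rw [e] at h2
          rw [hsplit v, h2]
          exact (cs3_alg3 (deriv (lam (m + 1)) v) (hat (d (m + 1))) (A (m + 1) v)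
            ((A (m + 1) v)⁻¹)
            (Xi * ((List.range m).map (fun j => A (j + 1) v)).prod) (hat (ω (m + 1) v))
            (hunit (m + 1) v)).symm
        rw [hval]
        exact t
      exact ⟨hC1, hC2, hC3⟩
  -- apply at level k
  obtain ⟨hC1, hC2, hC3⟩ := key (k - 1) (by omega)
  rw [Nat.sub_add_cancel hk] at hC1 hC2 hC3
  have hXf : X = fun w => Xi * ((List.range (k - 1)).map (fun j => A (j + 1) w)).prod :=
    funext hX
  have hP : ∀ v, HasDerivAt X (X v * hat (ω k v)) v := by
    intro v
    rw [hXf]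
    simpa using hC3 v
  have hd1 : deriv X = fun v => X v * hat (ω k v) := funext fun v => (hP v).deriv
  have hQ : ∀ v, HasDerivAt (fun w => X w * hat (ω k w))
      (X v * hat (ω k v) * hat (ω k v) + X v * hat (ωd k v)) v :=
    fun v => (hP v).mul (hC1 v)
  have hd2 : deriv (deriv X) = fun v => X v * hat (ω k v) * hat (ω k v) + X v * hat (ωd k v) := by
    rw [hd1]; exact funext fun v => (hQ v).deriv
  rw [hd2]
  have t := ((hQ u).mul (hC1 u)).add ((hP u).mul (hC2 u))
  have heq : X u * (hat (ω k u) ^ 3 + 2 • (hat (ω k u) * hat (ωd k u))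
        + hat (ωd k u) * hat (ω k u) + hat (ωdd k u))
      = (X u * hat (ω k u) * hat (ω k u) + X u * hat (ωd k u)) * hat (ω k u)
          + (X u * hat (ω k u)) * hat (ωd k u)
        + ((X u * hat (ω k u)) * hat (ωd k u) + X u * hat (ωdd k u)) := by
    noncomm_ring
  rw [heq]
  exact t
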